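/- Let r ≡ 3 (mod 4) and assume m = r(n−m+1). Then there exist orientation-preserving diffeomorphism-germs σ : (ℝ^m,0) → (ℝ^m,0) and τ : (ℝ^n,0) → (ℝ^n,0) such that τ∘h_{r,(1,−1)}∘σ = h_{0,r} as germs at 0. -/

import Mathlib

open Filter Topology Matrix

noncomputable section

/-- The `q`-th component of `f` (`0`-indexed), or `0` if `q` is out of range. -/
def comp {m n : ℕ} (f : (Fin m → ℝ) → (Fin n → ℝ)) (q : ℕ) : (Fin m → ℝ) → ℝ :=
  fun x => if h : q < n then f x ⟨q, h⟩ else 0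

/-- The `q`-th coordinate of `x` (`0`-indexed), or `0` if `q` is out of range. -/
def xhat {m : ℕ} (x : Fin m → ℝ) (q : ℕ) : ℝ := if h : q < m then x ⟨q, h⟩ else 0

/-- The partial derivative of `g` at `p` in the `q`-th coordinate direction. -/
def pd {m : ℕ} (g : (Fin m → ℝ) → ℝ) (p : Fin m → ℝ) (q : ℕ) : ℝ :=
  fderiv ℝ g p (fun l : Fin m => if l.val = q then 1 else 0)

/-- The Jacobian matrix of `f` at `p`; its rank is the rank of `df_p`. -/
def jac {m n : ℕ} (f : (Fin m → ℝ) → (Fin n → ℝ)) (p : Fin m → ℝ) : Matrix (Fin n) (Fin m) ℝ :=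
  Matrix.of fun i l => pd (comp f i.val) p l.val

/-- `lam f i` is the paper's `λ_{i+1}` (here `i` is `0`-indexed, `0 ≤ i ≤ n-m`):
the determinant of the `m×m` matrix whose rows are the gradients of
`f_0, …, f_{m-2}, f_{m-1+i}` (`0`-indexed components). -/
def lam {m n : ℕ} (f : (Fin m → ℝ) → (Fin n → ℝ)) (i : ℕ) (p : Fin m → ℝ) : ℝ :=
  Matrix.det (Matrix.of fun (k l : Fin m) =>
    pd (comp f (if k.val < m - 1 then k.val else m - 1 + i)) p l.val)

/-- `Λ = (λ_1, …, λ_{n-m+1}) : ℝ^m → ℝ^{n-m+1}`. -/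
def Lam {m n : ℕ} (f : (Fin m → ℝ) → (Fin n → ℝ)) (p : Fin m → ℝ) : Fin (n - m + 1) → ℝ :=
  fun i => lam f i.val p

/-- The Jacobian matrix of `Λ` at `p`. -/
def dLam {m n : ℕ} (f : (Fin m → ℝ) → (Fin n → ℝ)) (p : Fin m → ℝ) :
    Matrix (Fin (n - m + 1)) (Fin m) ℝ :=
  Matrix.of fun i l => pd (fun x => Lam f x i) p l.val

/-- `etaIter f η j = η^jΛ`, the `j`-fold iterated directional derivative of `Λ` along `η`. -/
def etaIter {m n : ℕ} (f : (Fin m → ℝ) → (Fin n → ℝ)) (η : (Fin m → ℝ) → (Fin m → ℝ)) :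
    ℕ → (Fin m → ℝ) → (Fin (n - m + 1) → ℝ)
  | 0 => Lam f
  | j + 1 => fun p => fderiv ℝ (etaIter f η j) p (η p)

/-- The Jacobian matrix of `(Λ, ηΛ, …, η^jΛ) : ℝ^m → ℝ^{(j+1)(n-m+1)}` at `p`. -/
def stackJac {m n : ℕ} (f : (Fin m → ℝ) → (Fin n → ℝ)) (η : (Fin m → ℝ) → (Fin m → ℝ))
    (j : ℕ) (p : Fin m → ℝ) : Matrix (Fin (j + 1) × Fin (n - m + 1)) (Fin m) ℝ :=
  Matrix.of fun si l => pd (fun x => etaIter f η si.1.val x si.2) p l.val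

/-- A diffeomorphism-germ `(ℝ^k,0) → (ℝ^k,0)`: it fixes `0`, is smooth at `0` and its
differential at `0` is invertible (so by the inverse function theorem it is a germ of a
diffeomorphism). -/
def IsDiffeoGerm {k : ℕ} (σ : (Fin k → ℝ) → (Fin k → ℝ)) : Prop :=
  σ 0 = 0 ∧ ContDiffAt ℝ (⊤ : ℕ∞) σ 0 ∧ LinearMap.det ((fderiv ℝ σ 0).toLinearMap) ≠ 0

/-- An orientation-preserving diffeomorphism-germ `(ℝ^k,0) → (ℝ^k,0)`. -/
def IsOPDiffeoGerm {k : ℕ} (σ : (Fin k → ℝ) → (Fin k → ℝ)) : Prop :=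
  σ 0 = 0 ∧ ContDiffAt ℝ (⊤ : ℕ∞) σ 0 ∧ 0 < LinearMap.det ((fderiv ℝ σ 0).toLinearMap)

/-- `A`-equivalence of map-germs at `0`. -/
def AEquiv {m n : ℕ} (f g : (Fin m → ℝ) → (Fin n → ℝ)) : Prop :=
  ∃ (φ : (Fin m → ℝ) → (Fin m → ℝ)) (Φ : (Fin n → ℝ) → (Fin n → ℝ)),
    IsDiffeoGerm φ ∧ IsDiffeoGerm Φ ∧ ∀ᶠ x in 𝓝 0, Φ (f (φ x)) = g x

/-- The Morin normal form `h_{0,r} : (ℝ^m,0) → (ℝ^n,0)` (all indices `0`-indexed):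
`h_{0,r}(x) = (x_1, …, x_{m-1}, h_1(x), …, h_{n-m+1}(x))` with
`h_i(x) = Σ_{j=1}^r x_{(i-1)r+j} x_m^j` for `i = 1, …, n-m` and
`h_{n-m+1}(x) = Σ_{j=1}^{r-1} x_{(n-m)r+j} x_m^j + x_m^{r+1}`. -/
def hMorinNF (m n r : ℕ) : (Fin m → ℝ) → (Fin n → ℝ) := fun x k =>
  if k.val < m - 1 then xhat x k.val
  else if k.val - (m - 1) < n - m then
    ∑ j ∈ Finset.range r, xhat x ((k.val - (m - 1)) * r + j) * (xhat x (m - 1)) ^ (j + 1)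
  else
    (∑ j ∈ Finset.range (r - 1), xhat x ((n - m) * r + j) * (xhat x (m - 1)) ^ (j + 1))
      + (xhat x (m - 1)) ^ (r + 1)

/-- The normal form `h_{r,(ε₁,ε₂)}(x) = (ε₁x_1, x_2, …, x_{m-1},
ε₁x_1x_m + Σ_{j=2}^r x_jx_m^j, h_2(x), …, h_{n-m}(x), ε₂h_{n-m+1}(x))`. -/
def hSign (m n r : ℕ) (e1 e2 : ℝ) : (Fin m → ℝ) → (Fin n → ℝ) := fun x k =>
  if k.val = 0 then e1 * xhat x 0
  else if k.val < m - 1 then xhat x k.val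
  else if k.val = m - 1 then
    e1 * xhat x 0 * xhat x (m - 1)
      + ∑ j ∈ Finset.Ico 1 r, xhat x j * (xhat x (m - 1)) ^ (j + 1)
  else if k.val - (m - 1) < n - m then
    ∑ j ∈ Finset.range r, xhat x ((k.val - (m - 1)) * r + j) * (xhat x (m - 1)) ^ (j + 1)
  else
    e2 * ((∑ j ∈ Finset.range (r - 1), xhat x ((n - m) * r + j) * (xhat x (m - 1)) ^ (j + 1))
      + (xhat x (m - 1)) ^ (r + 1))

lemma isOPDiffeoGerm_diag {k : ℕ} (c : Fin k → ℝ) (hc : 0 < ∏ i, c i) :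
    IsOPDiffeoGerm (fun x i => c i * x i) := by
  set M : (Fin k → ℝ) →ₗ[ℝ] (Fin k → ℝ) := LinearMap.pi (fun i => c i • LinearMap.proj i) with hM
  have hMapp : ∀ (x : Fin k → ℝ) i, M x i = c i * x i := by
    intro x i; simp [hM, LinearMap.pi_apply]
  have hfun : (fun (x : Fin k → ℝ) i => c i * x i) = ⇑(LinearMap.toContinuousLinearMap M) := by
    funext x i
    simp [hMapp]
  refine ⟨by funext i; simp, ?_, ?_⟩
  · rw [hfun]; exact (M.toContinuousLinearMap.contDiff).contDiffAt
  · rw [hfun, ContinuousLinearMap.fderiv]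
    have h1 : (LinearMap.toContinuousLinearMap M).toLinearMap = M :=
      LinearMap.coe_toContinuousLinearMap M
    rw [h1, ← LinearMap.det_toMatrix' M]
    have h2 : LinearMap.toMatrix' M = Matrix.diagonal c := by
      ext i j
      rw [LinearMap.toMatrix'_apply, hMapp]
      simp [Matrix.diagonal, Pi.single_apply]
    rw [h2, Matrix.det_diagonal]
    exact hc

lemma block_prod (r : ℕ) (hr : r % 4 = 3) :
    ∏ j ∈ Finset.range r, ((-1:ℝ))^(j+1) = 1 := by
  rw [Finset.prod_pow_eq_pow_sum]
  apply Even.neg_one_pow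
  have h1 : (∑ i ∈ Finset.range r, i) * 2 = r * (r - 1) := Finset.sum_range_id_mul_two r
  have h2 : ∑ j ∈ Finset.range r, (j + 1) = (∑ i ∈ Finset.range r, i) + r := by
    rw [Finset.sum_add_distrib, Finset.sum_const, Finset.card_range, smul_eq_mul, mul_one]
  obtain ⟨a, ha⟩ : ∃ a, r = 4 * a + 3 := ⟨r / 4, by omega⟩
  have h3 : r * (r - 1) = 16 * (a * a) + 20 * a + 6 := by
    have hr1 : r - 1 = 4 * a + 2 := by omega
    rw [hr1, ha]; ring
  rw [Nat.even_iff]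
  omega

lemma prod_blocks (r : ℕ) (hr : r % 4 = 3) (t : ℕ) :
    ∏ k ∈ Finset.range (r * t), ((-1:ℝ))^(k % r + 1) = 1 := by
  induction t with
  | zero => simp
  | succ t ih =>
    have h : r * (t + 1) = r * t + r := by ring
    rw [h, Finset.prod_range_add, ih, one_mul]
    have h2 : ∀ i ∈ Finset.range r, ((-1:ℝ))^((r * t + i) % r + 1) = (-1)^(i+1) := by
      intro i hi
      rw [Nat.mul_add_mod, Nat.mod_eq_of_lt (Finset.mem_range.mp hi)]
    rw [Finset.prod_congr rfl h2, block_prod r hr]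

lemma key1 (e : ℕ) (a : ℝ) : (-1:ℝ)^e * ((-1)^e * a) = a := by
  rw [← mul_assoc, ← mul_pow]; norm_num

lemma key2 (e : ℕ) (a b : ℝ) : ((-1:ℝ)^e * a) * (-b)^e = a * b^e := by
  rw [neg_pow b]
  calc ((-1:ℝ)^e * a) * ((-1)^e * b^e) = ((-1)^e * (-1)^e) * (a * b^e) := by ring
  _ = a * b^e := by rw [← mul_pow]; norm_num

/-- Case `r ≡ 3 (mod 4)`, `m = r(n-m+1)`: `h_{r,(1,-1)}` is
`A`-isotopic to `h_{0,r}` via orientation-preserving diffeomorphism-germs. -/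
theorem stmt19 {m n r : ℕ} (hmn : m < n) (hr : r % 4 = 3)
    (hdim : m = r * (n - m + 1)) :
    ∃ (σ : (Fin m → ℝ) → (Fin m → ℝ)) (τ : (Fin n → ℝ) → (Fin n → ℝ)),
      IsOPDiffeoGerm σ ∧ IsOPDiffeoGerm τ ∧
      ∀ᶠ x in 𝓝 (0 : Fin m → ℝ), τ (hSign m n r 1 (-1) (σ x)) = hMorinNF m n r x := by
  have hr3 : 3 ≤ r := by omega
  have hnm1 : 1 ≤ n - m := by omega
  have hm2r : 2 * r ≤ m := by
    rw [hdim]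
    calc 2 * r = r * 2 := by ring
    _ ≤ r * (n - m + 1) := Nat.mul_le_mul_left r (by omega)
  have hm1mod : (m - 1) % r = r - 1 := by
    have h1 : m = r * (n - m) + r := by
      conv_lhs => rw [hdim]
      rw [Nat.mul_add, Nat.mul_one]
    have h2 : m - 1 = r * (n - m) + (r - 1) := by omega
    rw [h2, Nat.mul_add_mod, Nat.mod_eq_of_lt (by omega)]
  have hdm1 : ((-1:ℝ))^((m - 1) % r + 1) = -1 := by
    rw [hm1mod, show r - 1 + 1 = r by omega]
    exact Odd.neg_one_pow (Nat.odd_iff.mpr (by omega))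
  have hprodm : ∏ k ∈ Finset.range m, ((-1:ℝ))^(k % r + 1) = 1 := by
    rw [hdim]; exact prod_blocks r hr (n - m + 1)
  refine ⟨fun x i => ((-1:ℝ))^(i.val % r + 1) * x i,
    fun y i => (if i.val < m - 1 then ((-1:ℝ))^(i.val % r + 1)
      else if i.val = n - 1 then -1 else 1) * y i,
    isOPDiffeoGerm_diag _ ?_, isOPDiffeoGerm_diag _ ?_, ?_⟩
  · rw [Fin.prod_univ_eq_prod_range (fun q => ((-1:ℝ))^(q % r + 1)) m, hprodm]
    norm_num
  · rw [Fin.prod_univ_eq_prod_range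
      (fun q => if q < m - 1 then ((-1:ℝ))^(q % r + 1) else if q = n - 1 then -1 else 1) n]
    set f : ℕ → ℝ := fun q => if q < m - 1 then ((-1:ℝ))^(q % r + 1)
      else if q = n - 1 then -1 else 1 with hf
    have e1 := Finset.prod_range_succ f (n - 1)
    rw [show n - 1 + 1 = n by omega] at e1
    have e2 : f (n - 1) = -1 := by
      rw [hf]; simp only []
      rw [if_neg (show ¬ (n - 1 < m - 1) by omega)]
      simp
    have e3 : ∏ q ∈ Finset.range (n-1), f q
        = (∏ q ∈ Finset.range (m-1), f q) * ∏ q ∈ Finset.Ico (m-1) (n-1), f q := by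
      simp only [Finset.range_eq_Ico]
      exact (Finset.prod_Ico_consecutive _ (Nat.zero_le _) (by omega : m - 1 ≤ n - 1)).symm
    have e4 : ∏ q ∈ Finset.Ico (m-1) (n-1), f q = 1 := by
      apply Finset.prod_eq_one
      intro q hq
      obtain ⟨h1, h2⟩ := Finset.mem_Ico.mp hq
      rw [hf]; simp only []
      rw [if_neg (by omega), if_neg (by omega)]
    have e5 : ∏ q ∈ Finset.range (m-1), f q
        = ∏ q ∈ Finset.range (m-1), ((-1:ℝ))^(q % r + 1) := by
      apply Finset.prod_congr rfl
      intro q hq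
      rw [hf]; simp only []
      rw [if_pos (Finset.mem_range.mp hq)]
    have e6 : (∏ q ∈ Finset.range (m-1), ((-1:ℝ))^(q % r + 1)) * ((-1:ℝ))^((m-1) % r + 1)
        = 1 := by
      rw [← Finset.prod_range_succ, show m - 1 + 1 = m by omega, hprodm]
    rw [hdm1] at e6
    have e7 : ∏ q ∈ Finset.range (m-1), ((-1:ℝ))^(q % r + 1) = -1 := by linarith
    rw [e1, e2, e3, e4, e5, e7]
    norm_num
  · refine Filter.Eventually.of_forall fun x => funext fun k => ?_
    simp only [hSign, hMorinNF]
    have hs : ∀ q, xhat (fun i : Fin m => ((-1:ℝ))^(i.val % r + 1) * x i) q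
        = ((-1:ℝ))^(q % r + 1) * xhat x q := by
      intro q
      by_cases hq : q < m
      · simp [xhat, hq]
      · simp [xhat, hq]
    have hsm : xhat (fun i : Fin m => ((-1:ℝ))^(i.val % r + 1) * x i) (m - 1)
        = - xhat x (m - 1) := by
      rw [hs, hdm1, neg_one_mul]
    have hs0 : xhat (fun i : Fin m => ((-1:ℝ))^(i.val % r + 1) * x i) 0
        = - xhat x 0 := by
      rw [hs, Nat.zero_mod, pow_one, neg_one_mul]
    have hkn : k.val < n := k.isLt
    by_cases hA : k.val < m - 1
    · by_cases hC : k.val = 0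
      · rw [if_pos hA, if_pos hC, if_pos hA, one_mul, hC, hs 0]
        exact key1 _ _
      · rw [if_pos hA, if_neg hC, if_pos hA, if_pos hA, hs k.val]
        exact key1 _ _
    · have hC : ¬ k.val = 0 := by omega
      by_cases hD : k.val = m - 1
      · have hB : ¬ k.val = n - 1 := by omega
        have hE : k.val - (m - 1) < n - m := by omega
        rw [if_neg hA, if_neg hB, if_neg hC, if_neg hA, if_pos hD, if_neg hA, if_pos hE]
        rw [one_mul, one_mul, hs0, hsm]
        rw [show k.val - (m - 1) = 0 by omega]
        simp only [zero_mul, zero_add]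
        rw [Finset.range_eq_Ico, Finset.sum_eq_sum_Ico_succ_bot (show 0 < r by omega)]
        rw [zero_add, pow_one, neg_mul_neg]
        congr 1
        apply Finset.sum_congr rfl
        intro j hj
        obtain ⟨hj1, hj2⟩ := Finset.mem_Ico.mp hj
        rw [hs j, Nat.mod_eq_of_lt hj2]
        exact key2 _ _ _
      · by_cases hE : k.val - (m - 1) < n - m
        · have hB : ¬ k.val = n - 1 := by omega
          rw [if_neg hA, if_neg hB, if_neg hC, if_neg hA, if_neg hD, if_pos hE,
            if_neg hA, if_pos hE, one_mul]
          apply Finset.sum_congr rfl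
          intro j hj
          have hj2 := Finset.mem_range.mp hj
          rw [hs ((k.val - (m - 1)) * r + j), hsm, Nat.mul_add_mod', Nat.mod_eq_of_lt hj2]
          exact key2 _ _ _
        · have hB : k.val = n - 1 := by omega
          rw [if_neg hA, if_pos hB, if_neg hC, if_neg hA, if_neg hD, if_neg hE,
            if_neg hA, if_neg hE]
          rw [neg_one_mul, neg_one_mul, neg_neg]
          congr 1
          · apply Finset.sum_congr rfl
            intro j hj
            have hj2 := Finset.mem_range.mp hj
            rw [hs ((n - m) * r + j), hsm, Nat.mul_add_mod', Nat.mod_eq_of_lt (by omega)]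
            exact key2 _ _ _
          · rw [hsm]
            exact Even.neg_pow (Nat.even_iff.mpr (by omega)) _
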